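/- A non-principal ultrafilter U on ℕ is a Laver ultrafilter if and only if for every f ∈ H, U is an I_f-ultrafilter, i.e., for every function F : ℕ → 2^ω there exists x ∈ U with F[x] ∈ I_f. -/

import Mathlib

/-- A partition of a set `S` into finitely many (nonempty, pairwise disjoint) pieces
covering everything. -/
def IsFinPartition {S : Type*} (P : Set (Set S)) : Prop :=
  P.Finite ∧ ∅ ∉ P ∧ ⋃₀ P = Set.univ ∧ P.Pairwise Disjoint

/-- A Laver ultrafilter. -/
def IsLaverUltrafilter {S : Type*} (U : Ultrafilter S) : Prop :=
  Filter.cofinite ≤ (U : Filter S) ∧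
  ∀ P : ℕ → Set (Set S), (∀ n, IsFinPartition (P n)) →
    ∃ x ∈ U, ∀ n, {p ∈ P n | (x ∩ p).Nonempty}.ncard ≤ n + 1

/-- `level A n` is the number of distinct restrictions to `n` of elements of `A ⊆ 2^ω`. -/
noncomputable def level (A : Set (ℕ → Bool)) (n : ℕ) : ℕ :=
  ((fun x : ℕ → Bool => (fun i : Fin n => x i)) '' A).ncard

/-- The class `H` of non-decreasing, unbounded `f : ℕ → ℕ` with `f n ≤ n`. -/
def memH (f : ℕ → ℕ) : Prop :=
  Monotone f ∧ (∀ m : ℕ, ∃ n, m ≤ f n) ∧ ∀ n, f n ≤ n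

/-- The ideal `I_f` on `2^ω`. -/
def idealI (f : ℕ → ℕ) : Set (Set (ℕ → Bool)) :=
  {A | ∀ d : ℕ, 1 ≤ d → ∀ᶠ n in Filter.atTop, d * level A n ≤ f n}

open Classical in
noncomputable def pbool (p : Prop) : Bool := if p then true else false

lemma pbool_iff {p : Prop} : pbool p = true ↔ p := by
  unfold pbool; split <;> simp_all

lemma level_mono (A : Set (ℕ → Bool)) : Monotone (level A) := by
  intro n n' h
  have key : ((fun x : ℕ → Bool => (fun i : Fin n => x i)) '' A)
      = (fun g : Fin n' → Bool => (fun i : Fin n => g (Fin.castLE h i))) ''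
        ((fun x : ℕ → Bool => (fun i : Fin n' => x i)) '' A) := by
    rw [← Set.image_comp]; rfl
  rw [level, level, key]
  exact Set.ncard_image_le (Set.toFinite _)

def blockStart (c : ℕ → ℕ) : ℕ → ℕ
  | 0 => 0
  | n + 1 => blockStart c n + c n + 1

lemma blockStart_strictMono (c : ℕ → ℕ) : StrictMono (blockStart c) :=
  strictMono_nat_of_lt_succ (fun n => by simp only [blockStart]; omega)

lemma self_le_blockStart (c : ℕ → ℕ) (n : ℕ) : n ≤ blockStart c n :=
  (blockStart_strictMono c).le_apply

def blockIdx (c : ℕ → ℕ) (m : ℕ) : ℕ := Nat.findGreatest (fun j => blockStart c j ≤ m) m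

lemma blockIdx_eq (c : ℕ → ℕ) (n i : ℕ) (h : i ≤ c n) :
    blockIdx c (blockStart c n + i) = n := by
  rw [blockIdx, Nat.findGreatest_eq_iff]
  refine ⟨le_trans (self_le_blockStart c n) (Nat.le_add_right _ _), fun _ => Nat.le_add_right _ _,
    fun j hj _ hle => ?_⟩
  have h1 : blockStart c (n + 1) ≤ blockStart c j := (blockStart_strictMono c).monotone hj
  simp only [blockStart] at h1
  omega

lemma blockStart_blockIdx_le (c : ℕ → ℕ) (m : ℕ) : blockStart c (blockIdx c m) ≤ m := by
  rw [blockIdx]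
  exact Nat.findGreatest_spec (P := fun j => blockStart c j ≤ m) (Nat.zero_le m)
    (by simp [blockStart])

lemma blockIdx_mono (c : ℕ → ℕ) : Monotone (blockIdx c) := by
  intro m m' h
  exact Nat.le_findGreatest (le_trans (Nat.findGreatest_le m) h)
    (le_trans (blockStart_blockIdx_le c m) h)

lemma blockIdx_le (c : ℕ → ℕ) (m : ℕ) : blockIdx c m ≤ m := Nat.findGreatest_le m

noncomputable def code (c : ℕ → ℕ) (e : ℕ → ℕ → Set ℕ) (k m : ℕ) : Bool :=
  pbool (k ∈ e (blockIdx c m) (m - blockStart c (blockIdx c m)))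

lemma code_spec (c : ℕ → ℕ) (e : ℕ → ℕ → Set ℕ) (k n i : ℕ) (h : i ≤ c n) :
    code c e k (blockStart c n + i) = pbool (k ∈ e n i) := by
  rw [code, blockIdx_eq c n i h, Nat.add_sub_cancel_left]

lemma exists_enum {α : Type*} [Nonempty α] (S : Set α) (hS : S.Finite) :
    ∃ e : ℕ → α, (∀ i, i < S.ncard → e i ∈ S) ∧ (∀ a ∈ S, ∃ i, i < S.ncard ∧ e i = a) ∧
      (∀ i j, i < S.ncard → j < S.ncard → e i = e j → i = j) := by
  have hcard : S.ncard = hS.toFinset.card := Set.ncard_eq_toFinset_card S hS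
  set E := hS.toFinset.equivFin with hE
  refine ⟨fun i => if h : i < S.ncard then (E.symm ⟨i, by omega⟩ : α) else Classical.arbitrary α,
    ?_, ?_, ?_⟩
  · intro i hi
    simp only [dif_pos hi]
    have := (E.symm ⟨i, by omega⟩).2
    rwa [Set.Finite.mem_toFinset] at this
  · intro a ha
    refine ⟨(E ⟨a, hS.mem_toFinset.mpr ha⟩).1, by omega, ?_⟩
    have hi : ((E ⟨a, hS.mem_toFinset.mpr ha⟩).1 : ℕ) < S.ncard := by omega
    simp only [dif_pos hi]
    have h2 : (⟨(E ⟨a, hS.mem_toFinset.mpr ha⟩).1, by omega⟩ : Fin hS.toFinset.card)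
        = E ⟨a, hS.mem_toFinset.mpr ha⟩ := by ext; rfl
    rw [h2, Equiv.symm_apply_apply]
  · intro i j hi hj hij
    simp only [dif_pos hi, dif_pos hj] at hij
    have := E.symm.injective (Subtype.coe_injective hij)
    simpa using congrArg Fin.val this

theorem stmt_2 (U : Ultrafilter ℕ) (hU : Filter.cofinite ≤ (U : Filter ℕ)) :
    IsLaverUltrafilter U ↔
      ∀ f : ℕ → ℕ, memH f → ∀ F : ℕ → (ℕ → Bool), ∃ x ∈ U, F '' x ∈ idealI f := by
  constructor
  · rintro ⟨-, hL⟩ f ⟨hfmono, hfunb, -⟩ F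
    choose g hg using hfunb
    set m : ℕ → ℕ := fun j => Nat.rec (g 4) (fun j mj => max (mj + 1) (g ((j+3)*(j+3)))) j
      with hm
    have hms : ∀ j, m (j+1) = max (m j + 1) (g ((j+3)*(j+3))) := fun j => rfl
    have hmono : StrictMono m := strictMono_nat_of_lt_succ (fun j => by rw [hms]; omega)
    have hmf : ∀ j, (j+2)*(j+2) ≤ f (m j) := by
      intro j
      cases j with
      | zero => exact hg 4
      | succ j =>
          have h1 : g ((j+3)*(j+3)) ≤ m (j+1) := by rw [hms]; omega
          calc (j+1+2)*(j+1+2) = (j+3)*(j+3) := by ring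
          _ ≤ f (g ((j+3)*(j+3))) := hg _
          _ ≤ f (m (j+1)) := hfmono h1
    set G : (j : ℕ) → ℕ → (Fin (m j) → Bool) := fun j k => fun i => F k i with hG
    set P : ℕ → Set (Set ℕ) :=
      fun j => {A | (∃ s : Fin (m j) → Bool, A = G j ⁻¹' {s}) ∧ A.Nonempty} with hP
    have hPfin : ∀ j, IsFinPartition (P j) := by
      intro j
      refine ⟨?_, ?_, ?_, ?_⟩
      · apply Set.Finite.subset (Set.finite_range (fun s : Fin (m j) → Bool => G j ⁻¹' {s}))
        rintro A ⟨⟨s, rfl⟩, -⟩; exact ⟨s, rfl⟩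
      · rintro ⟨-, h⟩; exact h.ne_empty rfl
      · ext k
        simp only [Set.mem_sUnion, Set.mem_univ, iff_true]
        exact ⟨G j ⁻¹' {G j k}, ⟨⟨G j k, rfl⟩, ⟨k, rfl⟩⟩, rfl⟩
      · rintro A ⟨⟨s, rfl⟩, -⟩ B ⟨⟨t, rfl⟩, -⟩ hne
        rw [Set.disjoint_left]
        intro k hk hk'
        apply hne
        simp only [Set.mem_preimage, Set.mem_singleton_iff] at hk hk'
        rw [← hk, hk']
    obtain ⟨x, hxU, hx⟩ := hL P hPfin
    refine ⟨x, hxU, ?_⟩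
    have hlev : ∀ j, level (F '' x) (m j) ≤ j + 1 := by
      intro j
      have step : level (F '' x) (m j) ≤ {p ∈ P j | (x ∩ p).Nonempty}.ncard := by
        apply Set.ncard_le_ncard_of_injOn (fun s => G j ⁻¹' {s}) ?_ ?_
          (Set.Finite.subset (hPfin j).1 (Set.sep_subset _ _))
        · rintro s ⟨y, ⟨k, hk, rfl⟩, rfl⟩
          exact ⟨⟨⟨G j k, rfl⟩, ⟨k, rfl⟩⟩, ⟨k, hk, rfl⟩⟩
        · rintro s ⟨y, ⟨k, hk, rfl⟩, rfl⟩ t ht hst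
          have hmem : k ∈ (fun s => G j ⁻¹' {s}) t := by
            rw [← hst]; exact Set.mem_preimage.mpr rfl
          exact hmem
      exact le_trans step (hx j)
    intro d hd
    rw [Filter.eventually_atTop]
    refine ⟨m d, fun n hn => ?_⟩
    set j := Nat.findGreatest (fun j => m j ≤ n) n with hj
    have hdn : d ≤ n := le_trans hmono.le_apply hn
    have hdj : d ≤ j := Nat.le_findGreatest hdn hn
    have hjn : m j ≤ n :=
      Nat.findGreatest_spec (P := fun j => m j ≤ n) hdn hn
    have hnj : n < m (j+1) := by
      by_contra h
      push_neg at h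
      have h2 : j + 1 ≤ j :=
        Nat.le_findGreatest (le_trans hmono.le_apply h) h
      omega
    have h1 : level (F '' x) n ≤ j + 2 :=
      le_trans (level_mono _ (le_of_lt hnj)) (hlev (j+1))
    calc d * level (F '' x) n ≤ (j+2) * (j+2) := Nat.mul_le_mul (by omega) h1
    _ ≤ f (m j) := hmf j
    _ ≤ f n := hfmono hjn
  · intro hIf
    refine ⟨hU, fun P hP => ?_⟩
    set c : ℕ → ℕ := fun n => (P n).ncard with hc
    choose e he1 he2 he3 using fun n => exists_enum (P n) (hP n).1
    set F : ℕ → ℕ → Bool := code c e with hF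
    set f : ℕ → ℕ := blockIdx c with hf
    have hfblock : ∀ M, f (blockStart c M) = M := by
      intro M
      have := blockIdx_eq c M 0 (Nat.zero_le _)
      simpa using this
    have hfH : memH f := by
      refine ⟨blockIdx_mono c, fun M => ⟨blockStart c M, (hfblock M).ge⟩, blockIdx_le c⟩
    obtain ⟨x, hxU, hxI⟩ := hIf f hfH F
    have h1 := hxI 1 le_rfl
    rw [Filter.eventually_atTop] at h1
    obtain ⟨N, hN⟩ := h1
    have hq : ∀ n, ∃ q ∈ P n, q ∈ U := by
      intro n
      have hu : ⋃₀ P n ∈ U := by rw [(hP n).2.2.1]; exact Filter.univ_mem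
      exact (Ultrafilter.finite_sUnion_mem_iff (hP n).1).mp hu
    choose q hqP hqU using hq
    classical
    set w : Set ℕ → ℕ := fun p => if h : (x ∩ p).Nonempty then h.choose else 0 with hw
    have hwspec : ∀ p, (x ∩ p).Nonempty → w p ∈ x ∩ p := by
      intro p hp
      rw [hw]
      simp only [dif_pos hp]
      exact hp.choose_spec
    have key : ∀ n, N ≤ n → {p ∈ P n | (x ∩ p).Nonempty}.ncard ≤ n + 1 := by
      intro n hn
      have hlev : {p ∈ P n | (x ∩ p).Nonempty}.ncard ≤ level (F '' x) (blockStart c (n+1)) := by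
        apply Set.ncard_le_ncard_of_injOn
          (fun p => (fun i : Fin (blockStart c (n+1)) => F (w p) i)) ?_ ?_ (Set.toFinite _)
        · rintro p ⟨hp, hne⟩
          exact ⟨F (w p), ⟨w p, (hwspec p hne).1, rfl⟩, rfl⟩
        · rintro p1 ⟨hp1, hne1⟩ p2 ⟨hp2, hne2⟩ heq
          obtain ⟨i, hi, hei⟩ := he2 n p1 hp1
          have hpos : blockStart c n + i < blockStart c (n+1) := by
            have hcc : c n = (P n).ncard := rfl
            simp only [blockStart]; omega
          have hcode1 : F (w p1) (blockStart c n + i) = pbool (w p1 ∈ e n i) :=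
            code_spec c e (w p1) n i (le_of_lt hi)
          have hcode2 : F (w p2) (blockStart c n + i) = pbool (w p2 ∈ e n i) :=
            code_spec c e (w p2) n i (le_of_lt hi)
          have hv1 : F (w p1) (blockStart c n + i) = true := by
            rw [hcode1, pbool_iff, hei]
            exact (hwspec p1 hne1).2
          have hv2 : F (w p2) (blockStart c n + i) = true := by
            have := congrFun heq ⟨blockStart c n + i, hpos⟩
            simp only at this
            rw [← this, hv1]
          have hw2 : w p2 ∈ p1 := by
            rw [hcode2, pbool_iff, hei] at hv2
            exact hv2
          by_contra hne
          have hd : Disjoint p1 p2 := (hP n).2.2.2 hp1 hp2 hne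
          exact (Set.disjoint_left.mp hd hw2) (hwspec p2 hne2).2
      have hlev2 : level (F '' x) (blockStart c (n+1)) ≤ n + 1 := by
        have hge : N ≤ blockStart c (n+1) :=
          le_trans (le_trans hn (Nat.le_succ n)) (self_le_blockStart c (n+1))
        have := hN _ hge
        rw [one_mul] at this
        calc level (F '' x) (blockStart c (n+1)) ≤ f (blockStart c (n+1)) := this
        _ = n + 1 := hfblock (n+1)
      exact le_trans hlev hlev2
    refine ⟨x ∩ ⋂ n ∈ Finset.range N, q n, ?_, ?_⟩
    · exact Filter.inter_mem hxU ((Filter.biInter_finset_mem _).mpr (fun n _ => hqU n))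
    intro n
    set x' := x ∩ ⋂ n ∈ Finset.range N, q n with hx'
    by_cases hn : n < N
    · have hsub : {p ∈ P n | (x' ∩ p).Nonempty} ⊆ {q n} := by
        rintro p ⟨hp, k, hk1, hk2⟩
        have hkq : k ∈ q n := by
          have h2 := hk1.2
          simp only [Set.mem_iInter] at h2
          exact h2 n (Finset.mem_range.mpr hn)
        by_contra hne
        have hd : Disjoint p (q n) := (hP n).2.2.2 hp (hqP n) (by simpa using hne)
        exact (Set.disjoint_left.mp hd hk2) hkq
      calc {p ∈ P n | (x' ∩ p).Nonempty}.ncard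
          ≤ ({q n} : Set (Set ℕ)).ncard := Set.ncard_le_ncard hsub (Set.finite_singleton _)
      _ = 1 := Set.ncard_singleton _
      _ ≤ n + 1 := by omega
    · push_neg at hn
      have hsub : {p ∈ P n | (x' ∩ p).Nonempty} ⊆ {p ∈ P n | (x ∩ p).Nonempty} := by
        rintro p ⟨hp, k, hk1, hk2⟩; exact ⟨hp, k, hk1.1, hk2⟩
      have hfin : {p ∈ P n | (x ∩ p).Nonempty}.Finite := (hP n).1.subset (Set.sep_subset _ _)
      exact le_trans (Set.ncard_le_ncard hsub hfin) (key n hn)
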